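/- arXiv:2002.01220 — 2 statements merged into one kernel-verified Lean document; each statement's English description precedes it below -/
import Mathlib

section
/- Let ψ : ℝ → [0,∞) be a sublinear potential, let y > 0 with ψ(y) > 0, let O ⊂ ℝ^d be a bounded open set, and let μ ∈ M(O). Then Φ(μ) ≥ (ψ(y)/y)·‖μ‖_TV − ψ(y)·λ(O), where λ(O) denotes the Lebesgue measure of O. -/
open scoped ENNReal
open MeasureTheory

/-- The convex conjugate `f*(x) = sup_{y ∈ ℝ} (x·y − f(y))`, taking values in `[0,∞]`. -/
noncomputable def convexConj (f : ℝ → ℝ) (x : ℝ) : ℝ≥0∞ :=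
  ⨆ y : ℝ, ENNReal.ofReal (x * y - f y)

/-- Integral of a real function against a finite signed Radon measure. -/
noncomputable def sintegral {α : Type*} [MeasurableSpace α]
    (μ : MeasureTheory.SignedMeasure α) (v : α → ℝ) : ℝ :=
  ∫ x, v x ∂μ.toJordanDecomposition.posPart - ∫ x, v x ∂μ.toJordanDecomposition.negPart

/-- The Temam–Demengel functional
`Φ(μ) = sup { ∫_O v dμ − ∫_O ψ*(v) dx : v ∈ C_c(O), ψ* ∘ v ∈ L¹(O) } ∈ [0,∞]`. -/
noncomputable def Phi (d : ℕ) (ψ : ℝ → ℝ) (O : Set (EuclideanSpace ℝ (Fin d)))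
    (μ : MeasureTheory.SignedMeasure (EuclideanSpace ℝ (Fin d))) : ℝ≥0∞ :=
  ⨆ v : {v : EuclideanSpace ℝ (Fin d) → ℝ // Continuous v ∧ HasCompactSupport v ∧
      tsupport v ⊆ O ∧ (∫⁻ x in O, convexConj ψ (v x)) ≠ ⊤},
    ENNReal.ofReal (sintegral μ v.1 - (∫⁻ x in O, convexConj ψ (v.1 x)).toReal)

lemma aux_urysohn {X : Type*} [TopologicalSpace X] [RegularSpace X] [LocallyCompactSpace X]
    {K U : Set X} (hK : IsCompact K) (hU : IsOpen U) (hKU : K ⊆ U) :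
    ∃ f : C(X, ℝ), Set.EqOn f 1 K ∧ tsupport f ⊆ U ∧ HasCompactSupport f ∧
      ∀ x, f x ∈ Set.Icc (0:ℝ) 1 := by
  obtain ⟨L, hLc, hLcl, hKL, hLU⟩ := exists_compact_closed_between hK hU hKU
  obtain ⟨f, hf1, hf0, hfc, hf01⟩ := exists_continuous_one_zero_of_isCompact hK
    isOpen_interior.isClosed_compl (Set.disjoint_compl_right_iff_subset.mpr hKL)
  refine ⟨f, hf1, ?_, hfc, hf01⟩
  have hsupp : Function.support f ⊆ interior L := by
    intro x hx
    by_contra hxc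
    exact hx (hf0 hxc)
  calc tsupport f ⊆ closure (interior L) := closure_mono hsupp
    _ ⊆ L := closure_minimal interior_subset hLcl
    _ ⊆ U := hLU

lemma aux_conj_le {ψ : ℝ → ℝ} (hconv : ConvexOn ℝ Set.univ ψ) (hnonneg : ∀ x, 0 ≤ ψ x)
    (h0 : ψ 0 = 0) (hsymm : ∀ x, ψ x = ψ (-x)) {y : ℝ} (hy : 0 < y) {s : ℝ}
    (hs : |s| ≤ ψ y / y) : convexConj ψ s ≤ ENNReal.ofReal (ψ y) := by
  refine iSup_le fun z => ENNReal.ofReal_le_ofReal ?_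
  have hψz : ψ |z| = ψ z := by
    rcases abs_cases z with ⟨h, _⟩ | ⟨h, _⟩
    · rw [h]
    · rw [h, ← hsymm]
  have h1 : s * z ≤ ψ y / y * |z| := by
    calc s * z ≤ |s * z| := le_abs_self _
      _ = |s| * |z| := abs_mul s z
      _ ≤ ψ y / y * |z| := mul_le_mul_of_nonneg_right hs (abs_nonneg z)
  rcases le_or_gt |z| y with h | h
  · have h2 : ψ y / y * |z| ≤ ψ y := by
      rw [div_mul_eq_mul_div, div_le_iff₀ hy]
      exact mul_le_mul_of_nonneg_left h (hnonneg y)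
    nlinarith [hnonneg z]
  · have hz : 0 < |z| := hy.trans h
    have key : ψ y ≤ y / |z| * ψ |z| := by
      have := hconv.2 (Set.mem_univ |z|) (Set.mem_univ 0)
        (show (0:ℝ) ≤ y / |z| by positivity)
        (show (0:ℝ) ≤ 1 - y / |z| by rw [sub_nonneg]; exact (div_le_one hz).mpr h.le)
        (by ring)
      simpa [h0, smul_eq_mul, div_mul_cancel₀, hz.ne'] using this
    have h3 : ψ y / y * |z| ≤ ψ |z| := by
      rw [div_mul_eq_mul_div, div_le_iff₀ hy]
      calc ψ y * |z| ≤ (y / |z| * ψ |z|) * |z| := by nlinarith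
        _ = ψ |z| * y := by field_simp
    linarith [hnonneg y]


set_option maxHeartbeats 1000000 in
/-- Let `ψ` be a sublinear potential, `y > 0` with `ψ y > 0`,
`O ⊂ ℝ^d` a bounded open set and `μ ∈ M(O)` a finite signed Radon measure on `O`.
Then `Φ(μ) ≥ (ψ y / y) ‖μ‖_TV − ψ y · λ(O)`. -/
theorem Phi_ge_TV (d : ℕ) (ψ : ℝ → ℝ)
    (hconv : ConvexOn ℝ Set.univ ψ) (hlsc : LowerSemicontinuous ψ)
    (hnonneg : ∀ x, 0 ≤ ψ x) (h0 : ψ 0 = 0) (hsymm : ∀ x, ψ x = ψ (-x))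
    (hsub : ∃ C > 0, ∀ x : ℝ, ψ x ≤ C * (1 + |x|))
    (y : ℝ) (hy : 0 < y) (hψy : 0 < ψ y)
    (O : Set (EuclideanSpace ℝ (Fin d))) (hO : IsOpen O) (hObd : Bornology.IsBounded O)
    (μ : MeasureTheory.SignedMeasure (EuclideanSpace ℝ (Fin d)))
    (hμO : μ.totalVariation Oᶜ = 0) :
    ENNReal.ofReal
        (ψ y / y * (μ.totalVariation O).toReal - ψ y * (volume O).toReal)
      ≤ Phi d ψ O μ := by
  classical
  set P := μ.toJordanDecomposition.posPart with hP
  set N := μ.toJordanDecomposition.negPart with hN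
  set t : ℝ := ψ y / y with htdef
  have ht : 0 < t := div_pos hψy hy
  -- P, N vanish outside O
  have hPN : P Oᶜ = 0 ∧ N Oᶜ = 0 := by
    have : P Oᶜ + N Oᶜ = 0 := by
      rw [← Measure.add_apply]; exact hμO
    exact add_eq_zero.mp this
  have hTV : (μ.totalVariation O).toReal = (P O).toReal + (N O).toReal := by
    rw [MeasureTheory.SignedMeasure.totalVariation, Measure.add_apply,
      ENNReal.toReal_add (measure_ne_top _ _) (measure_ne_top _ _)]
  -- the ε-argument
  refine ENNReal.le_of_forall_pos_le_add fun ε hε _ => ?_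
  set δ : ℝ := (ε : ℝ) / (4 * t) with hδdef
  have hδ : 0 < δ := div_pos hε (by positivity)
  have hδne : ENNReal.ofReal δ ≠ 0 := by
    simp [ENNReal.ofReal_eq_zero, not_le, hδ]
  -- mutual singularity
  obtain ⟨u, humeas, hPu, hNuc⟩ := μ.toJordanDecomposition.mutuallySingular
  have hPOu : P (O \ u) = P O := measure_diff_null hPu
  have hNOu : N (O \ uᶜ) = N O := measure_diff_null hNuc
  -- compact approximations
  obtain ⟨Kp, hKpsub, hKpc, hKplt⟩ :=
    (hO.measurableSet.diff humeas).exists_isCompact_lt_add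
      (μ := P) (measure_ne_top _ _) hδne
  obtain ⟨Kn, hKnsub, hKnc, hKnlt⟩ :=
    (hO.measurableSet.diff humeas.compl).exists_isCompact_lt_add
      (μ := N) (measure_ne_top _ _) hδne
  rw [hPOu] at hKplt
  rw [hNOu] at hKnlt
  have hdisj : Disjoint Kp Kn := by
    refine Set.disjoint_left.mpr fun x hxp hxn => ?_
    exact (hKpsub hxp).2 (by simpa using (hKnsub hxn).2)
  obtain ⟨U, V, hUo, hVo, hKpU, hKnV, hUV⟩ :=
    SeparatedNhds.of_isCompact_isCompact hKpc hKnc hdisj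
  obtain ⟨f, hf1, hfsupp, hfc, hf01⟩ :=
    aux_urysohn hKpc (hUo.inter hO) (Set.subset_inter hKpU fun x hx => (hKpsub hx).1)
  obtain ⟨g, hg1, hgsupp, hgc, hg01⟩ :=
    aux_urysohn hKnc (hVo.inter hO) (Set.subset_inter hKnV fun x hx => (hKnsub hx).1)
  set v : EuclideanSpace ℝ (Fin d) → ℝ := fun x => t * (f x - g x) with hvdef
  have hvcont : Continuous v := continuous_const.mul (f.continuous.sub g.continuous)
  have hsub' : Function.support v ⊆ Function.support f ∪ Function.support g := by
    intro x hx
    by_contra hc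
    simp only [Set.mem_union, Function.mem_support, not_or, not_not] at hc
    apply hx
    simp [hvdef, hc.1, hc.2]
  have hvsupp : HasCompactSupport v :=
    HasCompactSupport.of_support_subset_isCompact (hfc.union hgc)
      (hsub'.trans (Set.union_subset_union subset_closure subset_closure))
  have htsupp : tsupport v ⊆ O := by
    calc tsupport v ⊆ closure (Function.support f ∪ Function.support g) :=
          closure_mono hsub'
      _ = tsupport f ∪ tsupport g := closure_union
      _ ⊆ O := Set.union_subset (hfsupp.trans Set.inter_subset_right)
          (hgsupp.trans Set.inter_subset_right)
  -- pointwise bound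
  have hvabs : ∀ x, |v x| ≤ t := by
    intro x
    have h1 := hf01 x; have h2 := hg01 x
    rw [hvdef, abs_mul, abs_of_pos ht]
    nlinarith [abs_le.mpr (⟨by linarith [h1.1, h2.2] , by linarith [h1.2, h2.1]⟩ :
      -1 ≤ f x - g x ∧ f x - g x ≤ 1)]
  -- v = t on Kp, v = -t on Kn
  have hgKp : ∀ x ∈ Kp, g x = 0 := by
    intro x hx
    have : x ∉ tsupport g := fun h =>
      Set.disjoint_left.mp hUV (hKpU hx) ((hgsupp h).1)
    exact image_eq_zero_of_notMem_tsupport this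
  have hfKn : ∀ x ∈ Kn, f x = 0 := by
    intro x hx
    have : x ∉ tsupport f := fun h =>
      Set.disjoint_left.mp hUV ((hfsupp h).1) (hKnV hx)
    exact image_eq_zero_of_notMem_tsupport this
  have hvKp : ∀ x ∈ Kp, v x = t := by
    intro x hx; simp [hvdef, hf1 hx, hgKp x hx]
  have hvKn : ∀ x ∈ Kn, v x = -t := by
    intro x hx; simp [hvdef, hg1 hx, hfKn x hx]
  -- lintegral bound
  have hlint : (∫⁻ x in O, convexConj ψ (v x)) ≤ ENNReal.ofReal (ψ y) * volume O := by
    calc (∫⁻ x in O, convexConj ψ (v x))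
        ≤ ∫⁻ _ in O, ENNReal.ofReal (ψ y) :=
          lintegral_mono fun x => aux_conj_le hconv hnonneg h0 hsymm hy (hvabs x)
      _ = ENNReal.ofReal (ψ y) * volume O := by
          rw [setLIntegral_const]
  have hvolO : volume O ≠ ⊤ := hObd.measure_lt_top.ne
  have hfin : (∫⁻ x in O, convexConj ψ (v x)) ≠ ⊤ :=
    (lt_of_le_of_lt hlint (ENNReal.mul_lt_top ENNReal.ofReal_lt_top
      hObd.measure_lt_top)).ne
  have hlintR : (∫⁻ x in O, convexConj ψ (v x)).toReal ≤ ψ y * (volume O).toReal := by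
    have := ENNReal.toReal_mono (by finiteness) hlint
    rwa [ENNReal.toReal_mul, ENNReal.toReal_ofReal hψy.le] at this
  -- integrability
  have hvintP : Integrable v P := hvcont.integrable_of_hasCompactSupport hvsupp
  have hvintN : Integrable v N := hvcont.integrable_of_hasCompactSupport hvsupp
  -- measure computations
  have hPuniv : P Set.univ = P O := by
    rw [← measure_add_measure_compl hO.measurableSet, hPN.1, add_zero]
  have hNuniv : N Set.univ = N O := by
    rw [← measure_add_measure_compl hO.measurableSet, hPN.2, add_zero]
  have hKpR : (P O).toReal ≤ (P Kp).toReal + δ := by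
    have := ENNReal.toReal_mono
      (by finiteness : (P Kp + ENNReal.ofReal δ) ≠ ⊤) hKplt.le
    rwa [ENNReal.toReal_add (measure_ne_top _ _) ENNReal.ofReal_ne_top,
      ENNReal.toReal_ofReal hδ.le] at this
  have hKnR : (N O).toReal ≤ (N Kn).toReal + δ := by
    have := ENNReal.toReal_mono
      (by finiteness : (N Kn + ENNReal.ofReal δ) ≠ ⊤) hKnlt.le
    rwa [ENNReal.toReal_add (measure_ne_top _ _) ENNReal.ofReal_ne_top,
      ENNReal.toReal_ofReal hδ.le] at this
  have hKpcR : (P Kpᶜ).toReal ≤ δ := by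
    have h1 : P Kpᶜ ≤ ENNReal.ofReal δ := by
      rw [measure_compl hKpc.measurableSet (measure_ne_top _ _), hPuniv]
      exact tsub_le_iff_left.mpr hKplt.le
    have := ENNReal.toReal_mono ENNReal.ofReal_ne_top h1
    rwa [ENNReal.toReal_ofReal hδ.le] at this
  have hKncR : (N Knᶜ).toReal ≤ δ := by
    have h1 : N Knᶜ ≤ ENNReal.ofReal δ := by
      rw [measure_compl hKnc.measurableSet (measure_ne_top _ _), hNuniv]
      exact tsub_le_iff_left.mpr hKnlt.le
    have := ENNReal.toReal_mono ENNReal.ofReal_ne_top h1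
    rwa [ENNReal.toReal_ofReal hδ.le] at this
  -- integral lower bound for P
  have hintP : t * (P O).toReal - 2 * t * δ ≤ ∫ x, v x ∂P := by
    have hsplit : (∫ x in Kp, v x ∂P) + (∫ x in Kpᶜ, v x ∂P) = ∫ x, v x ∂P :=
      integral_add_compl hKpc.measurableSet hvintP
    have h1 : (∫ x in Kp, v x ∂P) = (P Kp).toReal * t := by
      rw [setIntegral_congr_fun hKpc.measurableSet hvKp, setIntegral_const, smul_eq_mul, measureReal_def]
    have h2 : -(t * δ) ≤ ∫ x in Kpᶜ, v x ∂P := by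
      have hle : ∀ x ∈ Kpᶜ, -t ≤ v x := fun x _ => (abs_le.mp (hvabs x)).1
      calc -(t * δ) ≤ (P Kpᶜ).toReal * (-t) := by
            have h3 : (P Kpᶜ).toReal * t ≤ δ * t :=
              mul_le_mul_of_nonneg_right hKpcR ht.le
            nlinarith
        _ = ∫ _ in Kpᶜ, (-t) ∂P := by rw [setIntegral_const, smul_eq_mul, measureReal_def]
        _ ≤ ∫ x in Kpᶜ, v x ∂P :=
            setIntegral_mono_on (integrable_const _).integrableOn
              hvintP.integrableOn hKpc.measurableSet.compl hle
    have h4 : (P Kp).toReal * t ≥ t * (P O).toReal - t * δ := by nlinarith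
    nlinarith [hsplit, h1, h2]
  -- integral upper bound for N
  have hintN : (∫ x, v x ∂N) ≤ -(t * (N O).toReal) + 2 * t * δ := by
    have hsplit : (∫ x in Kn, v x ∂N) + (∫ x in Knᶜ, v x ∂N) = ∫ x, v x ∂N :=
      integral_add_compl hKnc.measurableSet hvintN
    have h1 : (∫ x in Kn, v x ∂N) = (N Kn).toReal * (-t) := by
      rw [setIntegral_congr_fun hKnc.measurableSet hvKn, setIntegral_const, smul_eq_mul, measureReal_def]
    have h2 : (∫ x in Knᶜ, v x ∂N) ≤ t * δ := by
      have hle : ∀ x ∈ Knᶜ, v x ≤ t := fun x _ => (abs_le.mp (hvabs x)).2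
      calc (∫ x in Knᶜ, v x ∂N) ≤ ∫ _ in Knᶜ, t ∂N :=
            setIntegral_mono_on hvintN.integrableOn
              (integrable_const _).integrableOn hKnc.measurableSet.compl hle
        _ = (N Knᶜ).toReal * t := by rw [setIntegral_const, smul_eq_mul, measureReal_def]
        _ ≤ t * δ := by nlinarith [mul_le_mul_of_nonneg_right hKncR ht.le]
    nlinarith [hsplit, h1, h2, mul_le_mul_of_nonneg_left hKnR ht.le]
  -- combine
  have hsint : t * (μ.totalVariation O).toReal - (ε : ℝ) ≤ sintegral μ v := by
    rw [sintegral, hTV]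
    have h4δ : 4 * t * δ = (ε : ℝ) := by
      rw [hδdef]; field_simp
    nlinarith [hintP, hintN]
  -- conclude
  have hmem : ENNReal.ofReal (sintegral μ v - (∫⁻ x in O, convexConj ψ (v x)).toReal)
      ≤ Phi d ψ O μ :=
    le_iSup (fun w : {v : EuclideanSpace ℝ (Fin d) → ℝ // Continuous v ∧
        HasCompactSupport v ∧ tsupport v ⊆ O ∧ (∫⁻ x in O, convexConj ψ (v x)) ≠ ⊤} =>
      ENNReal.ofReal (sintegral μ w.1 - (∫⁻ x in O, convexConj ψ (w.1 x)).toReal))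
      ⟨v, hvcont, hvsupp, htsupp, hfin⟩
  have hchain : ENNReal.ofReal
      (ψ y / y * (μ.totalVariation O).toReal - ψ y * (volume O).toReal)
      ≤ ENNReal.ofReal (sintegral μ v - (∫⁻ x in O, convexConj ψ (v x)).toReal)
        + (ε : ℝ≥0∞) := by
    calc ENNReal.ofReal (ψ y / y * (μ.totalVariation O).toReal - ψ y * (volume O).toReal)
        = ENNReal.ofReal ((t * (μ.totalVariation O).toReal - (ε:ℝ)
            - ψ y * (volume O).toReal) + (ε:ℝ)) := by congr 1; ring
      _ ≤ ENNReal.ofReal (t * (μ.totalVariation O).toReal - (ε:ℝ)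
            - ψ y * (volume O).toReal) + ENNReal.ofReal (ε:ℝ) := ENNReal.ofReal_add_le
      _ ≤ ENNReal.ofReal (sintegral μ v - (∫⁻ x in O, convexConj ψ (v x)).toReal)
            + (ε : ℝ≥0∞) := by
          rw [ENNReal.ofReal_coe_nnreal]
          exact add_le_add_left (ENNReal.ofReal_le_ofReal (by linarith [hsint, hlintR])) _
  exact hchain.trans (add_le_add_left hmem _)
end

section
/- Let ψ : ℝ → [0,∞) be convex, lower semicontinuous with ψ(0) = 0. Let O ⊂ ℝ^d be a bounded open set, h ∈ L¹(O) with extension h̄ by zero to ℝ^d, let e_0, …, e_l ∈ ℝ^d, ε > 0, and let ζ_0, …, ζ_l : ℝ^d → [0,1] be measurable with Σ_{j=0}^l ζ_j(x) = 1 for all x ∈ O and Σ_{j=0}^l ζ_j(x + ε e_j) ≤ 1 for all x ∈ O. Let ξ : ℝ^d → [0,1] be measurable with ξ(x − ε e_j) ≤ ξ(x) for every j and every x ∈ O with ζ_j(x) > 0, and with ξ(x − ε e_j) ζ_j(x) = 0 whenever x ∉ O. Then ∫_O ξ(x) ψ( Σ_{j=0}^l ζ_j(x + ε e_j) h̄(x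 + ε e_j) ) dx ≤ ∫_O ξ(x) ψ(h(x)) dx (as an inequality in [0,∞]). -/
open scoped ENNReal
open MeasureTheory

/-- Jensen's inequality for subprobability weights, using `ψ 0 = 0`. -/
private lemma jensen_sub {ψ : ℝ → ℝ} (hconv : ConvexOn ℝ Set.univ ψ) (h0 : ψ 0 = 0)
    {n : ℕ} (w a : Fin n → ℝ) (hw0 : ∀ j, 0 ≤ w j) (hw1 : ∑ j, w j ≤ 1) :
    ψ (∑ j, w j * a j) ≤ ∑ j, w j * ψ (a j) := by
  have key := hconv.map_add_sum_le (t := Finset.univ) (w := w) (p := a)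
    (v := 1 - ∑ j, w j) (q := 0)
    (fun i _ => hw0 i) (by ring) (fun i _ => trivial) (by linarith) trivial
  simpa [h0, smul_eq_mul] using key

/-- The key cut-off estimate: shifting an `L¹` density by the
directions `e_j` with the partition of unity `ζ_j` does not increase the energy
`∫ ξ ψ(·) dx`, as an inequality in `[0,∞]`. -/
theorem shift_energy_estimate (d l : ℕ) (ψ : ℝ → ℝ)
    (hconv : ConvexOn ℝ Set.univ ψ) (hlsc : LowerSemicontinuous ψ)
    (hnonneg : ∀ x, 0 ≤ ψ x) (h0 : ψ 0 = 0)
    (O : Set (EuclideanSpace ℝ (Fin d))) (hO : IsOpen O) (hObd : Bornology.IsBounded O)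
    (h : EuclideanSpace ℝ (Fin d) → ℝ) (hh : IntegrableOn h O)
    (e : Fin (l + 1) → EuclideanSpace ℝ (Fin d)) (ε : ℝ) (hε : 0 < ε)
    (ζ : Fin (l + 1) → EuclideanSpace ℝ (Fin d) → ℝ)
    (hζmeas : ∀ j, Measurable (ζ j))
    (hζ0 : ∀ j x, 0 ≤ ζ j x) (hζ1 : ∀ j x, ζ j x ≤ 1)
    (hζsum : ∀ x ∈ O, ∑ j, ζ j x = 1)
    (hζsum' : ∀ x ∈ O, ∑ j, ζ j (x + ε • e j) ≤ 1)
    (ξ : EuclideanSpace ℝ (Fin d) → ℝ) (hξmeas : Measurable ξ)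
    (hξ0 : ∀ x, 0 ≤ ξ x) (hξ1 : ∀ x, ξ x ≤ 1)
    (hmono : ∀ j, ∀ x ∈ O, 0 < ζ j x → ξ (x - ε • e j) ≤ ξ x)
    (hvanish : ∀ j, ∀ x, x ∉ O → ξ (x - ε • e j) * ζ j x = 0) :
    (∫⁻ x in O, ENNReal.ofReal
        (ξ x * ψ (∑ j, ζ j (x + ε • e j) * Set.indicator O h (x + ε • e j))))
      ≤ ∫⁻ x in O, ENNReal.ofReal (ξ x * ψ (h x)) := by
  set hb : EuclideanSpace ℝ (Fin d) → ℝ := Set.indicator O h with hbdef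
  have hψmeas : Measurable ψ := hlsc.measurable
  have hhb : AEMeasurable hb volume := by
    have : AEStronglyMeasurable hb volume :=
      (aestronglyMeasurable_indicator_iff hO.measurableSet).2 hh.1
    exact this.aemeasurable
  -- the shifted integrands
  set F : Fin (l + 1) → EuclideanSpace ℝ (Fin d) → ℝ≥0∞ := fun j x =>
    ENNReal.ofReal (ξ x * ζ j (x + ε • e j) * ψ (hb (x + ε • e j))) with hF
  set G : Fin (l + 1) → EuclideanSpace ℝ (Fin d) → ℝ≥0∞ := fun j y =>
    ENNReal.ofReal (ξ (y - ε • e j) * ζ j y * ψ (hb y)) with hG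
  have hmp : ∀ j : Fin (l + 1),
      MeasurePreserving (fun x : EuclideanSpace ℝ (Fin d) => x + ε • e j) volume volume :=
    fun j => measurePreserving_add_right volume (ε • e j)
  have hFmeas : ∀ j, AEMeasurable (F j) volume := by
    intro j
    have h1 : AEMeasurable (fun x : EuclideanSpace ℝ (Fin d) => hb (x + ε • e j)) volume :=
      hhb.comp_quasiMeasurePreserving (hmp j).quasiMeasurePreserving
    have h2 : AEMeasurable (fun x : EuclideanSpace ℝ (Fin d) => ψ (hb (x + ε • e j))) volume :=
      hψmeas.comp_aemeasurable h1
    have h3 : Measurable (fun x : EuclideanSpace ℝ (Fin d) => ζ j (x + ε • e j)) :=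
      (hζmeas j).comp (measurable_add_const _)
    exact ((hξmeas.aemeasurable.mul h3.aemeasurable).mul h2).ennreal_ofReal
  -- Step 1: pointwise Jensen on O
  have step1 : (∫⁻ x in O, ENNReal.ofReal
        (ξ x * ψ (∑ j, ζ j (x + ε • e j) * hb (x + ε • e j))))
      ≤ ∫⁻ x in O, ∑ j, F j x := by
    refine lintegral_mono_ae ?_
    filter_upwards [ae_restrict_mem hO.measurableSet] with x hx
    have hjen : ψ (∑ j, ζ j (x + ε • e j) * hb (x + ε • e j))
        ≤ ∑ j, ζ j (x + ε • e j) * ψ (hb (x + ε • e j)) :=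
      jensen_sub hconv h0 _ _ (fun j => hζ0 j _) (hζsum' x hx)
    have hreal : ξ x * ψ (∑ j, ζ j (x + ε • e j) * hb (x + ε • e j))
        ≤ ∑ j, ξ x * ζ j (x + ε • e j) * ψ (hb (x + ε • e j)) := by
      calc ξ x * ψ (∑ j, ζ j (x + ε • e j) * hb (x + ε • e j))
          ≤ ξ x * ∑ j, ζ j (x + ε • e j) * ψ (hb (x + ε • e j)) :=
            mul_le_mul_of_nonneg_left hjen (hξ0 x)
        _ = ∑ j, ξ x * ζ j (x + ε • e j) * ψ (hb (x + ε • e j)) := by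
            rw [Finset.mul_sum]; simp [mul_assoc]
    calc ENNReal.ofReal (ξ x * ψ (∑ j, ζ j (x + ε • e j) * hb (x + ε • e j)))
        ≤ ENNReal.ofReal (∑ j, ξ x * ζ j (x + ε • e j) * ψ (hb (x + ε • e j))) :=
          ENNReal.ofReal_le_ofReal hreal
      _ = ∑ j, F j x := by
          rw [ENNReal.ofReal_sum_of_nonneg]
          intro j _
          exact mul_nonneg (mul_nonneg (hξ0 x) (hζ0 j _)) (hnonneg _)
  -- Step 2: split the sum
  have step2 : (∫⁻ x in O, ∑ j, F j x) = ∑ j, ∫⁻ x in O, F j x :=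
    lintegral_finset_sum' _ (fun j _ => (hFmeas j).restrict)
  -- Step 3: for each j, translate and compare
  have step3 : ∀ j, (∫⁻ x in O, F j x) ≤ ∫⁻ y in O, ENNReal.ofReal (ξ y * ζ j y * ψ (h y)) := by
    intro j
    have hFG : ∀ x, F j x = G j (x + ε • e j) := by
      intro x
      simp only [hF, hG, add_sub_cancel_right]
    have t1 : (∫⁻ x in O, F j x) ≤ ∫⁻ x, F j x := setLIntegral_le_lintegral _ _
    have t2 : (∫⁻ x, F j x) = ∫⁻ y, G j y := by
      simp_rw [hFG]
      exact lintegral_add_right_eq_self (G j) (ε • e j)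
    have t3 : (∫⁻ y, G j y) = ∫⁻ y in O, G j y := by
      rw [← lintegral_indicator hO.measurableSet]
      refine lintegral_congr fun y => ?_
      by_cases hy : y ∈ O
      · simp [Set.indicator_of_mem hy]
      · simp [Set.indicator_of_notMem hy, hG, hvanish j y hy]
    have t4 : (∫⁻ y in O, G j y) ≤ ∫⁻ y in O, ENNReal.ofReal (ξ y * ζ j y * ψ (h y)) := by
      refine lintegral_mono_ae ?_
      filter_upwards [ae_restrict_mem hO.measurableSet] with y hy
      have hhb' : hb y = h y := Set.indicator_of_mem hy h
      refine ENNReal.ofReal_le_ofReal ?_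
      simp only [hhb']
      rcases eq_or_lt_of_le (hζ0 j y) with hz | hz
      · rw [← hz]; simp
      · have := hmono j y hy hz
        exact mul_le_mul_of_nonneg_right (mul_le_mul_of_nonneg_right this (hζ0 j y))
          (hnonneg _)
    calc (∫⁻ x in O, F j x) ≤ ∫⁻ x, F j x := t1
      _ = ∫⁻ y, G j y := t2
      _ = ∫⁻ y in O, G j y := t3
      _ ≤ ∫⁻ y in O, ENNReal.ofReal (ξ y * ζ j y * ψ (h y)) := t4
  -- Step 4: recombine the sum
  have hhmeas : AEMeasurable h (volume.restrict O) := hh.1.aemeasurable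
  have step4 : (∑ j, ∫⁻ y in O, ENNReal.ofReal (ξ y * ζ j y * ψ (h y)))
      = ∫⁻ y in O, ∑ j, ENNReal.ofReal (ξ y * ζ j y * ψ (h y)) := by
    refine (lintegral_finset_sum' _ (fun j _ => ?_)).symm
    exact ((hξmeas.aemeasurable.restrict.mul (hζmeas j).aemeasurable.restrict).mul
      (hψmeas.comp_aemeasurable hhmeas)).ennreal_ofReal
  have step5 : (∫⁻ y in O, ∑ j, ENNReal.ofReal (ξ y * ζ j y * ψ (h y)))
      = ∫⁻ y in O, ENNReal.ofReal (ξ y * ψ (h y)) := by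
    refine lintegral_congr_ae ?_
    filter_upwards [ae_restrict_mem hO.measurableSet] with y hy
    rw [← ENNReal.ofReal_sum_of_nonneg
      (fun j _ => mul_nonneg (mul_nonneg (hξ0 y) (hζ0 j y)) (hnonneg _))]
    congr 1
    have : ∑ j, ξ y * ζ j y * ψ (h y) = (∑ j, ζ j y) * (ξ y * ψ (h y)) := by
      rw [Finset.sum_mul]
      refine Finset.sum_congr rfl fun j _ => by ring
    rw [this, hζsum y hy, one_mul]
  calc (∫⁻ x in O, ENNReal.ofReal
        (ξ x * ψ (∑ j, ζ j (x + ε • e j) * hb (x + ε • e j))))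
      ≤ ∫⁻ x in O, ∑ j, F j x := step1
    _ = ∑ j, ∫⁻ x in O, F j x := step2
    _ ≤ ∑ j, ∫⁻ y in O, ENNReal.ofReal (ξ y * ζ j y * ψ (h y)) :=
        Finset.sum_le_sum fun j _ => step3 j
    _ = ∫⁻ y in O, ∑ j, ENNReal.ofReal (ξ y * ζ j y * ψ (h y)) := step4
    _ = ∫⁻ y in O, ENNReal.ofReal (ξ y * ψ (h y)) := step5
end
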